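/- arXiv:2510.25777 — 4 statements merged into one kernel-verified Lean document; each statement's English description precedes it below -/
import Mathlib

section
/- Lemma 1 (positivity of solutions): Let S_H, E_H, I_H, R_H, S_F, E_F, I_F, S_D, E_D, I_D, R_D, M be a solution of the rabies model on [0, ∞) with S_H(0) > 0, S_F(0) > 0, S_D(0) ≥ 0, and E_H(0), I_H(0), R_H(0), E_F(0), I_F(0), E_D(0), I_D(0), R_D(0), M(0) all nonnegative. Then for every t ≥ 0: S_H(t) > 0, S_F(t) > 0, and E_H(t), I_H(t), R_H(t), E_F(t), I_F(t), S_D(t), E_D(t), I_D(t), R_D(t), M(t) are all nonnegative. -/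
open Filter Set Topology Real

lemma negPart_quotient_tendsto {x : ℝ → ℝ} {v a t : ℝ} (hta : a ≤ t)
    (hd : HasDerivWithinAt x v (Set.Ici a) t) :
    ∃ L, L ≤ (if x t ≤ 0 then max 0 (-v) else 0) ∧
      Tendsto (fun z => (z - t)⁻¹ * (max 0 (-(x z)) - max 0 (-(x t)))) (𝓝[>] t) (𝓝 L) := by
  have hmono : 𝓝[>] t ≤ 𝓝[Set.Ici a] t :=
    nhdsWithin_mono t (fun z hz => hta.trans (le_of_lt hz))
  have hmono' : 𝓝[>] t ≤ 𝓝[Set.Ici a \ {t}] t :=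
    nhdsWithin_mono t (fun z hz => ⟨hta.trans (le_of_lt hz), ne_of_gt hz⟩)
  have hslope : Tendsto (slope x t) (𝓝[>] t) (𝓝 v) :=
    (hasDerivWithinAt_iff_tendsto_slope.1 hd).mono_left hmono'
  have hcont : Tendsto x (𝓝[>] t) (𝓝 (x t)) :=
    hd.continuousWithinAt.tendsto.mono_left hmono
  rcases lt_trichotomy (x t) 0 with hneg | h0 | hpos
  · refine ⟨-v, by rw [if_pos hneg.le]; exact le_max_right _ _, ?_⟩
    have hev : ∀ᶠ z in 𝓝[>] t, x z < 0 := hcont.eventually (Iio_mem_nhds hneg)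
    refine hslope.neg.congr' ?_
    filter_upwards [hev] with z hz
    rw [max_eq_right (neg_nonneg.2 hz.le), max_eq_right (neg_nonneg.2 hneg.le), slope_def_field]
    field_simp
    ring
  · refine ⟨max 0 (-v), by rw [if_pos h0.le], ?_⟩
    refine (tendsto_const_nhds.max hslope.neg).congr' ?_
    filter_upwards [self_mem_nhdsWithin] with z (hz : t < z)
    have hzt : (0:ℝ) ≤ (z - t)⁻¹ := inv_nonneg.2 (sub_nonneg.2 hz.le)
    rw [h0, neg_zero, max_self, sub_zero, mul_max_of_nonneg _ _ hzt, mul_zero, slope_def_field,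
      h0]
    congr 1
    field_simp
    ring
  · refine ⟨0, by rw [if_neg (not_le.2 hpos)], ?_⟩
    have hev : ∀ᶠ z in 𝓝[>] t, 0 < x z := hcont.eventually (Ioi_mem_nhds hpos)
    refine tendsto_const_nhds.congr' ?_
    filter_upwards [hev] with z hz
    rw [max_eq_left (neg_nonpos.2 hz.le), max_eq_left (neg_nonpos.2 hpos.le)]
    simp

lemma negPart_invariance {n : ℕ} (x v : Fin n → ℝ → ℝ) {a b : ℝ} (K : ℝ) (hK : 0 ≤ K)
    (hd : ∀ i, ∀ t ∈ Set.Icc a b, HasDerivWithinAt (x i) (v i t) (Set.Ici a) t)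
    (h0 : ∀ i, 0 ≤ x i a)
    (hbd : ∀ t ∈ Set.Icc a b, ∀ i, x i t ≤ 0 →
      -(v i t) ≤ K * ∑ j, max 0 (-(x j t)))
    : ∀ t ∈ Set.Icc a b, ∀ i, 0 ≤ x i t := by
  rcases le_or_gt a b with hab | hab
  swap
  · intro t ht; exact absurd (ht.1.trans ht.2) (not_le.2 hab)
  set N : ℝ → ℝ := fun t => ∑ j, max 0 (-(x j t)) with hN
  set φ : ℝ → ℝ := fun t => ∑ j, (if x j t ≤ 0 then max 0 (-(v j t)) else 0) with hφ
  have hNnonneg : ∀ t, 0 ≤ N t := fun t =>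
    Finset.sum_nonneg fun j _ => le_max_left _ _
  have hcontN : ContinuousOn N (Set.Icc a b) := by
    apply continuousOn_finset_sum
    intro j _
    intro t ht
    exact continuousWithinAt_const.max
      ((hd j t ht).continuousWithinAt.mono Set.Icc_subset_Ici_self).neg
  have key : ∀ t ∈ Set.Icc a b, N t ≤ gronwallBound 0 ((n : ℝ) * K) 0 (t - a) := by
    apply le_gronwallBound_of_liminf_deriv_right_le hcontN (f' := φ)
    · intro t ht r hr
      have hL : ∀ i : Fin n, ∃ L, L ≤ (if x i t ≤ 0 then max 0 (-(v i t)) else 0) ∧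
          Tendsto (fun z => (z - t)⁻¹ * (max 0 (-(x i z)) - max 0 (-(x i t)))) (𝓝[>] t) (𝓝 L) :=
        fun i => negPart_quotient_tendsto ht.1 (hd i t ⟨ht.1, ht.2.le⟩)
      choose L hLle hLtend using hL
      have hsum : Tendsto (fun z => ∑ i, (z - t)⁻¹ * (max 0 (-(x i z)) - max 0 (-(x i t))))
          (𝓝[>] t) (𝓝 (∑ i, L i)) := tendsto_finset_sum _ (fun i _ => hLtend i)
      have hsum' : Tendsto (fun z => (z - t)⁻¹ * (N z - N t)) (𝓝[>] t) (𝓝 (∑ i, L i)) := by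
        refine hsum.congr (fun z => ?_)
        rw [hN]
        simp only
        rw [← Finset.sum_sub_distrib, Finset.mul_sum]
      have hlt : (∑ i, L i) < r := lt_of_le_of_lt (Finset.sum_le_sum fun i _ => hLle i) hr
      exact ((hsum'.eventually (Iio_mem_nhds hlt)).frequently)
    · exact Finset.sum_nonpos fun j _ => max_le le_rfl (neg_nonpos.2 (h0 j))
    · intro t ht
      have ht' : t ∈ Set.Icc a b := ⟨ht.1, ht.2.le⟩
      rw [hφ]
      simp only
      have hterm : ∀ i : Fin n, (if x i t ≤ 0 then max 0 (-(v i t)) else 0) ≤ K * N t := by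
        intro i
        split_ifs with h
        · exact max_le (mul_nonneg hK (hNnonneg t)) (hbd t ht' i h)
        · exact mul_nonneg hK (hNnonneg t)
      calc (∑ i, (if x i t ≤ 0 then max 0 (-(v i t)) else 0)) ≤ ∑ _i : Fin n, K * N t :=
            Finset.sum_le_sum fun i _ => hterm i
        _ = (n : ℝ) * K * N t + 0 := by simp [Finset.sum_const, mul_assoc]
  intro t ht i
  have hNt : N t ≤ 0 := by
    have := key t ht
    rwa [gronwallBound_ε0_δ0] at this
  have h1 : max 0 (-(x i t)) ≤ N t :=
    Finset.single_le_sum (f := fun j => max 0 (-(x j t))) (fun j _ => le_max_left _ _)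
      (Finset.mem_univ i)
  have := h1.trans hNt
  have h2 : -(x i t) ≤ 0 := le_trans (le_max_right _ _) this
  linarith

lemma nonneg_global {n : ℕ} (x v : Fin n → ℝ → ℝ)
    (hd : ∀ i, ∀ t ∈ Set.Ici (0:ℝ), HasDerivWithinAt (x i) (v i t) (Set.Ici 0) t)
    (h0 : ∀ i, 0 ≤ x i 0)
    (hloc : ∀ T ≥ (0:ℝ), (∀ i, 0 ≤ x i T) → ∀ b, T < b → ∃ δ > 0, T + δ ≤ b ∧ ∃ K ≥ (0:ℝ),
      ∀ t ∈ Set.Icc T (T + δ), ∀ i, x i t ≤ 0 → -(v i t) ≤ K * ∑ j, max 0 (-(x j t))) :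
    ∀ t ≥ (0:ℝ), ∀ i, 0 ≤ x i t := by
  intro t₁ ht₁
  set A : Set ℝ := {t | t ∈ Set.Icc 0 t₁ ∧ ∀ s ∈ Set.Icc 0 t, ∀ i, 0 ≤ x i s} with hA
  have h0A : (0:ℝ) ∈ A := by
    refine ⟨⟨le_refl 0, ht₁⟩, fun s hs i => ?_⟩
    have : s = 0 := le_antisymm hs.2 hs.1
    rw [this]; exact h0 i
  have hAne : A.Nonempty := ⟨0, h0A⟩
  have hAbdd : BddAbove A := ⟨t₁, fun a ha => ha.1.2⟩
  set T := sSup A with hT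
  have hT0 : 0 ≤ T := le_csSup hAbdd h0A
  have hTt₁ : T ≤ t₁ := csSup_le hAne fun a ha => ha.1.2
  have claim1 : ∀ s, 0 ≤ s → s < T → ∀ i, 0 ≤ x i s := by
    intro s hs0 hsT i
    obtain ⟨a, haA, hsa⟩ := exists_lt_of_lt_csSup hAne hsT
    exact haA.2 s ⟨hs0, hsa.le⟩ i
  have claim2 : ∀ i, 0 ≤ x i T := by
    intro i
    rcases eq_or_lt_of_le hT0 with h | h
    · rw [← h]; exact h0 i
    · have hne : (𝓝[Set.Ioo 0 T] T).NeBot := by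
        apply mem_closure_iff_nhdsWithin_neBot.1
        rw [closure_Ioo (ne_of_lt h)]
        exact ⟨hT0, le_refl T⟩
      have htend : Tendsto (x i) (𝓝[Set.Ioo 0 T] T) (𝓝 (x i T)) :=
        ((hd i T (Set.mem_Ici.2 hT0)).continuousWithinAt.tendsto).mono_left
          (nhdsWithin_mono T (fun z hz => hz.1.le))
      refine ge_of_tendsto htend ?_
      filter_upwards [self_mem_nhdsWithin] with s hs
      exact claim1 s hs.1.le hs.2 i
  have claim3 : ∀ s ∈ Set.Icc (0:ℝ) T, ∀ i, 0 ≤ x i s := by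
    intro s hs i
    rcases lt_or_eq_of_le hs.2 with h | h
    · exact claim1 s hs.1 h i
    · rw [h]; exact claim2 i
  have hTeq : T = t₁ := by
    by_contra hne
    have hTlt : T < t₁ := lt_of_le_of_ne hTt₁ hne
    obtain ⟨δ, hδ, hTδ, K, hK, hbd⟩ := hloc T hT0 claim2 t₁ hTlt
    have hd' : ∀ i, ∀ t ∈ Set.Icc T (T + δ), HasDerivWithinAt (x i) (v i t) (Set.Ici T) t :=
      fun i t ht => (hd i t (Set.mem_Ici.2 (hT0.trans ht.1))).mono
        (Set.Ici_subset_Ici.2 hT0)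
    have hinv := negPart_invariance x v K hK hd' claim2 hbd
    have hmem : T + δ ∈ A := by
      refine ⟨⟨by linarith, hTδ⟩, fun s hs i => ?_⟩
      rcases le_or_gt s T with h | h
      · exact claim3 s ⟨hs.1, h⟩ i
      · exact hinv s ⟨h.le, hs.2⟩ i
    have := le_csSup hAbdd hmem
    linarith
  intro i
  exact claim3 t₁ ⟨ht₁, hTeq.ge⟩ i

lemma S_case {θ μ βr c cb r s nr ns K N : ℝ}
    (hθ : 0 ≤ θ) (hμ : 0 ≤ μ) (hβr : 0 ≤ βr) (hs : s ≤ 0)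
    (hc : |c| ≤ cb) (hnr : -r ≤ nr) (hns : -s ≤ ns) (hns0 : 0 ≤ ns) (hnr0 : 0 ≤ nr)
    (hnrN : nr ≤ N) (hnsN : ns ≤ N) (hN : 0 ≤ N) (hK : βr + cb ≤ K) :
    -(θ + βr * r - μ * s - c * s) ≤ K * N := by
  have hcb : 0 ≤ cb := (abs_nonneg c).trans hc
  have h1 : c * s ≤ cb * ns := by nlinarith [le_abs_self c, neg_abs_le c]
  have h2 : βr * (-r) ≤ βr * nr := mul_le_mul_of_nonneg_left hnr hβr
  have h3 : μ * s ≤ 0 := mul_nonpos_of_nonneg_of_nonpos hμ hs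
  have h4 : βr * nr + cb * ns ≤ K * N := by
    nlinarith [mul_le_mul_of_nonneg_left hnrN hβr, mul_le_mul_of_nonneg_left hnsN hcb,
      mul_le_mul_of_nonneg_right hK hN]
  nlinarith

lemma E_case {a c cb d s B ns e K N : ℝ}
    (he : e ≤ 0) (ha : 0 ≤ a)
    (hcd : -c ≤ d) (hd : 0 ≤ d) (hc : |c| ≤ cb) (hsB : s ≤ B) (hB : 0 ≤ B)
    (hns : -s ≤ ns) (hns0 : 0 ≤ ns)
    (hfin : d * B + cb * ns ≤ K * N) :
    -(c * s - a * e) ≤ K * N := by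
  have hcb : 0 ≤ cb := (abs_nonneg c).trans hc
  have hae : a * e ≤ 0 := mul_nonpos_of_nonneg_of_nonpos ha he
  have key : -(c * s) ≤ d * B + cb * ns := by
    rcases le_or_gt 0 s with h | h
    · rcases le_or_gt (-c) 0 with h2 | h2
      · nlinarith
      · nlinarith
    · nlinarith [neg_abs_le c, le_abs_self c]
  nlinarith

lemma lin_case {b1 b2 b3 a x e1 e2 e3 n1 n2 n3 K N : ℝ}
    (hx : x ≤ 0) (ha : 0 ≤ a) (hb1 : 0 ≤ b1) (hb2 : 0 ≤ b2) (hb3 : 0 ≤ b3)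
    (hn1 : -e1 ≤ n1) (hn2 : -e2 ≤ n2) (hn3 : -e3 ≤ n3)
    (hn1N : n1 ≤ N) (hn2N : n2 ≤ N) (hn3N : n3 ≤ N) (hN : 0 ≤ N)
    (hK : b1 + b2 + b3 ≤ K) :
    -(b1 * e1 + b2 * e2 + b3 * e3 - a * x) ≤ K * N := by
  have h1 : b1 * (-e1) ≤ b1 * N := mul_le_mul_of_nonneg_left (hn1.trans hn1N) hb1
  have h2 : b2 * (-e2) ≤ b2 * N := mul_le_mul_of_nonneg_left (hn2.trans hn2N) hb2
  have h3 : b3 * (-e3) ≤ b3 * N := mul_le_mul_of_nonneg_left (hn3.trans hn3N) hb3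
  have h4 : a * x ≤ 0 := mul_nonpos_of_nonneg_of_nonpos ha hx
  nlinarith [mul_le_mul_of_nonneg_right hK hN]

lemma lam_bounds {m C B : ℝ} (hC : 0 < C) (hB : 0 ≤ B) (hm1 : -(C/2) ≤ m) (hm2 : |m| ≤ B) :
    m / (m + C) ≤ 2 * B / C ∧ -(m / (m + C)) ≤ 2 / C * max 0 (-m) := by
  have hmB := abs_le.1 hm2
  have hmC : 0 < m + C := by linarith
  constructor
  · rw [div_le_div_iff₀ hmC hC]
    rcases le_or_gt 0 m with h | h
    · nlinarith
    · nlinarith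
  · rw [neg_div', div_le_iff₀ hmC]
    rcases le_or_gt 0 m with h | h
    · have : max 0 (-m) = 0 := max_eq_left (by linarith)
      rw [this]
      nlinarith
    · have : max 0 (-m) = -m := max_eq_right (by linarith)
      rw [this]
      have h1 : (2 / C) * (m + C) ≥ 1 := by
        rw [ge_iff_le, ← sub_nonneg]
        have : 2 / C * (m + C) - 1 = (2 * (m + C) - C) / C := by field_simp
        rw [this]
        apply div_nonneg _ hC.le
        linarith
      nlinarith

lemma strict_pos_exp {f v : ℝ → ℝ} {K t₁ : ℝ} (ht₁ : 0 ≤ t₁)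
    (hd : ∀ t ∈ Set.Icc 0 t₁, HasDerivWithinAt f (v t) (Set.Ici 0) t)
    (hbound : ∀ t ∈ Set.Icc 0 t₁, 0 ≤ v t + K * f t)
    (h0 : 0 < f 0) : 0 < f t₁ := by
  set h : ℝ → ℝ := fun t => f t * Real.exp (K * t) with hh
  have hcontf : ContinuousOn f (Set.Icc 0 t₁) := fun t ht =>
    ((hd t ht).continuousWithinAt).mono (fun z hz => hz.1)
  have hconth : ContinuousOn h (Set.Icc 0 t₁) :=
    hcontf.mul ((Real.continuous_exp.comp (continuous_const.mul continuous_id)).continuousOn)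
  have hda : ∀ t ∈ interior (Set.Icc (0:ℝ) t₁),
      HasDerivAt h (v t * Real.exp (K * t) + f t * (Real.exp (K * t) * K)) t := by
    intro t ht
    rw [interior_Icc] at ht
    have hf : HasDerivAt f (v t) t :=
      (hd t ⟨ht.1.le, ht.2.le⟩).hasDerivAt
        (Filter.mem_of_superset (Ioi_mem_nhds ht.1) Set.Ioi_subset_Ici_self)
    have hexp : HasDerivAt (fun t => Real.exp (K * t)) (Real.exp (K * t) * K) t := by
      simpa using ((hasDerivAt_id t).const_mul K).exp
    exact hf.mul hexp
  have hmono : MonotoneOn h (Set.Icc 0 t₁) := by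
    apply monotoneOn_of_deriv_nonneg (convex_Icc 0 t₁) hconth
    · exact fun t ht => (hda t ht).differentiableAt.differentiableWithinAt
    · intro t ht
      rw [(hda t ht).deriv]
      have ht' : t ∈ Set.Icc (0:ℝ) t₁ := by
        rw [interior_Icc] at ht; exact ⟨ht.1.le, ht.2.le⟩
      have hb := hbound t ht'
      have he := Real.exp_pos (K * t)
      nlinarith
  have hle : h 0 ≤ h t₁ := hmono ⟨le_refl 0, ht₁⟩ ⟨ht₁, le_refl t₁⟩ ht₁
  have hh0 : h 0 = f 0 := by simp [hh]
  have he := Real.exp_pos (K * t₁)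
  have hht : h t₁ = f t₁ * Real.exp (K * t₁) := rfl
  by_contra hc
  push_neg at hc
  have : h t₁ ≤ 0 := by rw [hht]; exact mul_nonpos_of_nonpos_of_nonneg hc he.le
  linarith

set_option maxHeartbeats 1600000 in
theorem rabies_positivity
    (θ1 θ2 θ3 τ1 τ2 τ3 β1 β2 β3 μ1 μ2 μ3 μ4 σ1 σ2 σ3 κ1 κ2 κ3 γ γ1 γ2 γ3 ψ1 ψ2 ψ3 ρ1 ρ2 ρ3 ν1 ν2 ν3 C : ℝ)
    (hθ1 : 0 < θ1)
    (hθ2 : 0 < θ2)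
    (hθ3 : 0 < θ3)
    (hτ1 : 0 < τ1)
    (hτ2 : 0 < τ2)
    (hτ3 : 0 < τ3)
    (hβ1 : 0 < β1)
    (hβ2 : 0 < β2)
    (hβ3 : 0 < β3)
    (hμ1 : 0 < μ1)
    (hμ2 : 0 < μ2)
    (hμ3 : 0 < μ3)
    (hμ4 : 0 < μ4)
    (hσ1 : 0 < σ1)
    (hσ2 : 0 < σ2)
    (hσ3 : 0 < σ3)
    (hκ1 : 0 < κ1)
    (hκ2 : 0 < κ2)
    (hκ3 : 0 < κ3)
    (hγ : 0 < γ)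
    (hγ1 : 0 < γ1)
    (hγ2 : 0 < γ2)
    (hγ3 : 0 < γ3)
    (hψ1 : 0 < ψ1)
    (hψ2 : 0 < ψ2)
    (hψ3 : 0 < ψ3)
    (hρ1 : 0 < ρ1)
    (hρ2 : 0 < ρ2)
    (hρ3 : 0 < ρ3)
    (hν1 : 0 < ν1)
    (hν2 : 0 < ν2)
    (hν3 : 0 < ν3)
    (hC : 0 < C)
    (S_H E_H I_H R_H S_F E_F I_F S_D E_D I_D R_D M : ℝ → ℝ)
    (hodeSH : ∀ t ∈ Set.Ici (0:ℝ), HasDerivWithinAt S_H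
        (θ1 + β3 * R_H t - μ1 * S_H t - (τ1 * I_F t + τ2 * I_D t + τ3 * (M t / (M t + C))) * S_H t) (Set.Ici 0) t)
    (hodeEH : ∀ t ∈ Set.Ici (0:ℝ), HasDerivWithinAt E_H
        ((τ1 * I_F t + τ2 * I_D t + τ3 * (M t / (M t + C))) * S_H t - (μ1 + β1 + β2) * E_H t) (Set.Ici 0) t)
    (hodeIH : ∀ t ∈ Set.Ici (0:ℝ), HasDerivWithinAt I_H
        (β1 * E_H t - (σ1 + μ1) * I_H t) (Set.Ici 0) t)
    (hodeRH : ∀ t ∈ Set.Ici (0:ℝ), HasDerivWithinAt R_H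
        (β2 * E_H t - (β3 + μ1) * R_H t) (Set.Ici 0) t)
    (hodeSF : ∀ t ∈ Set.Ici (0:ℝ), HasDerivWithinAt S_F
        (θ2 - (κ1 * I_F t + κ2 * I_D t + κ3 * (M t / (M t + C))) * S_F t - μ2 * S_F t) (Set.Ici 0) t)
    (hodeEF : ∀ t ∈ Set.Ici (0:ℝ), HasDerivWithinAt E_F
        ((κ1 * I_F t + κ2 * I_D t + κ3 * (M t / (M t + C))) * S_F t - (μ2 + γ) * E_F t) (Set.Ici 0) t)
    (hodeIF : ∀ t ∈ Set.Ici (0:ℝ), HasDerivWithinAt I_F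
        (γ * E_F t - (μ2 + σ2) * I_F t) (Set.Ici 0) t)
    (hodeSD : ∀ t ∈ Set.Ici (0:ℝ), HasDerivWithinAt S_D
        (θ3 - μ3 * S_D t - (ψ1 * I_F t / (1 + ρ1) + ψ2 * I_D t / (1 + ρ2) + ψ3 * (M t / (M t + C)) / (1 + ρ3)) * S_D t + γ3 * R_D t) (Set.Ici 0) t)
    (hodeED : ∀ t ∈ Set.Ici (0:ℝ), HasDerivWithinAt E_D
        ((ψ1 * I_F t / (1 + ρ1) + ψ2 * I_D t / (1 + ρ2) + ψ3 * (M t / (M t + C)) / (1 + ρ3)) * S_D t - (μ3 + γ1 + γ2) * E_D t) (Set.Ici 0) t)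
    (hodeID : ∀ t ∈ Set.Ici (0:ℝ), HasDerivWithinAt I_D
        (γ1 * E_D t - (μ3 + σ3) * I_D t) (Set.Ici 0) t)
    (hodeRD : ∀ t ∈ Set.Ici (0:ℝ), HasDerivWithinAt R_D
        (γ2 * E_D t - (μ3 + γ3) * R_D t) (Set.Ici 0) t)
    (hodeM : ∀ t ∈ Set.Ici (0:ℝ), HasDerivWithinAt M
        (ν1 * I_H t + ν2 * I_F t + ν3 * I_D t - μ4 * M t) (Set.Ici 0) t)
    (hSH0 : 0 < S_H 0) (hSF0 : 0 < S_F 0) (hSD0 : 0 ≤ S_D 0)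
    (hEH0 : 0 ≤ E_H 0) (hIH0 : 0 ≤ I_H 0) (hRH0 : 0 ≤ R_H 0)
    (hEF0 : 0 ≤ E_F 0) (hIF0 : 0 ≤ I_F 0)
    (hED0 : 0 ≤ E_D 0) (hID0 : 0 ≤ I_D 0) (hRD0 : 0 ≤ R_D 0)
    (hM0 : 0 ≤ M 0) :
    ∀ t ≥ (0:ℝ), 0 < S_H t ∧ 0 < S_F t ∧
      0 ≤ E_H t ∧ 0 ≤ I_H t ∧ 0 ≤ R_H t ∧ 0 ≤ E_F t ∧ 0 ≤ I_F t ∧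
      0 ≤ S_D t ∧ 0 ≤ E_D t ∧ 0 ≤ I_D t ∧ 0 ≤ R_D t ∧ 0 ≤ M t := by
  set X : Fin 12 → ℝ → ℝ := ![S_H, E_H, I_H, R_H, S_F, E_F, I_F, S_D, E_D, I_D, R_D, M] with hX
  set V : Fin 12 → ℝ → ℝ := ![
    fun t => θ1 + β3 * R_H t - μ1 * S_H t - (τ1 * I_F t + τ2 * I_D t + τ3 * (M t / (M t + C))) * S_H t,
    fun t => (τ1 * I_F t + τ2 * I_D t + τ3 * (M t / (M t + C))) * S_H t - (μ1 + β1 + β2) * E_H t,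
    fun t => β1 * E_H t - (σ1 + μ1) * I_H t,
    fun t => β2 * E_H t - (β3 + μ1) * R_H t,
    fun t => θ2 - (κ1 * I_F t + κ2 * I_D t + κ3 * (M t / (M t + C))) * S_F t - μ2 * S_F t,
    fun t => (κ1 * I_F t + κ2 * I_D t + κ3 * (M t / (M t + C))) * S_F t - (μ2 + γ) * E_F t,
    fun t => γ * E_F t - (μ2 + σ2) * I_F t,
    fun t => θ3 - μ3 * S_D t - (ψ1 * I_F t / (1 + ρ1) + ψ2 * I_D t / (1 + ρ2) + ψ3 * (M t / (M t + C)) / (1 + ρ3)) * S_D t + γ3 * R_D t,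
    fun t => (ψ1 * I_F t / (1 + ρ1) + ψ2 * I_D t / (1 + ρ2) + ψ3 * (M t / (M t + C)) / (1 + ρ3)) * S_D t - (μ3 + γ1 + γ2) * E_D t,
    fun t => γ1 * E_D t - (μ3 + σ3) * I_D t,
    fun t => γ2 * E_D t - (μ3 + γ3) * R_D t,
    fun t => ν1 * I_H t + ν2 * I_F t + ν3 * I_D t - μ4 * M t] with hV
  have hdX : ∀ i : Fin 12, ∀ t ∈ Set.Ici (0:ℝ), HasDerivWithinAt (X i) (V i t) (Set.Ici 0) t := by
    intro i
    fin_cases i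
    · simpa [hX, hV] using hodeSH
    · simpa [hX, hV] using hodeEH
    · simpa [hX, hV] using hodeIH
    · simpa [hX, hV] using hodeRH
    · simpa [hX, hV] using hodeSF
    · simpa [hX, hV] using hodeEF
    · simpa [hX, hV] using hodeIF
    · simpa [hX, hV] using hodeSD
    · simpa [hX, hV] using hodeED
    · simpa [hX, hV] using hodeID
    · simpa [hX, hV] using hodeRD
    · simpa [hX, hV] using hodeM
  have h0X : ∀ i : Fin 12, 0 ≤ X i 0 := by
    intro i
    fin_cases i
    · simpa [hX] using hSH0.le
    · simpa [hX] using hEH0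
    · simpa [hX] using hIH0
    · simpa [hX] using hRH0
    · simpa [hX] using hSF0.le
    · simpa [hX] using hEF0
    · simpa [hX] using hIF0
    · simpa [hX] using hSD0
    · simpa [hX] using hED0
    · simpa [hX] using hID0
    · simpa [hX] using hRD0
    · simpa [hX] using hM0
  have hloc : ∀ T ≥ (0:ℝ), (∀ i, 0 ≤ X i T) → ∀ b, T < b → ∃ δ > 0, T + δ ≤ b ∧ ∃ K ≥ (0:ℝ),
      ∀ t ∈ Set.Icc T (T + δ), ∀ i, X i t ≤ 0 → -(V i t) ≤ K * ∑ j, max 0 (-(X j t)) := by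
    intro T hT hXT b hTb
    have hcont : ∀ i : Fin 12, ContinuousOn (X i) (Set.Icc 0 b) := fun i t ht =>
      ((hdX i t ht.1).continuousWithinAt).mono (fun z hz => hz.1)
    have hBex : ∀ i : Fin 12, ∃ Bi : ℝ, ∀ t ∈ Set.Icc (0:ℝ) b, |X i t| ≤ Bi := by
      intro i
      obtain ⟨Bi, hBi⟩ := isCompact_Icc.exists_bound_of_continuousOn (hcont i)
      exact ⟨Bi, fun t ht => by simpa [Real.norm_eq_abs] using hBi t ht⟩
    choose Bs hBs using hBex
    obtain ⟨B, hBdef⟩ : ∃ B : ℝ, B = 1 + ∑ j : Fin 12, |Bs j| := ⟨_, rfl⟩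
    have hsum0 : 0 ≤ ∑ j : Fin 12, |Bs j| := Finset.sum_nonneg fun j _ => abs_nonneg _
    have hB1 : 1 ≤ B := by rw [hBdef]; linarith
    have hB0 : 0 ≤ B := by linarith
    have hBle : ∀ i : Fin 12, ∀ t ∈ Set.Icc (0:ℝ) b, |X i t| ≤ B := by
      intro i t ht
      have h1 : Bs i ≤ ∑ j : Fin 12, |Bs j| :=
        le_trans (le_abs_self _)
          (Finset.single_le_sum (f := fun j => |Bs j|) (fun j _ => abs_nonneg _)
            (Finset.mem_univ i))
      have := hBs i t ht
      rw [hBdef]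
      linarith
    have hMT : 0 ≤ M T := by simpa [hX] using hXT 11
    have hMcont : ContinuousWithinAt M (Set.Ici 0) T := by
      have := (hdX 11 T hT).continuousWithinAt
      simpa [hX] using this
    have hev : ∀ᶠ s in 𝓝[Set.Ici 0] T, -(C/2) < M s :=
      hMcont.tendsto.eventually (eventually_gt_nhds (by linarith))
    obtain ⟨U, hUopen, hTU, hUsub⟩ := mem_nhdsWithin.1 hev
    obtain ⟨η, hη, hball⟩ := Metric.isOpen_iff.1 hUopen T hTU
    refine ⟨min (η/2) (b - T), lt_min (by linarith) (by linarith), ?_, ?_⟩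
    · have : min (η/2) (b - T) ≤ b - T := min_le_right _ _
      linarith
    have hMlow : ∀ t ∈ Set.Icc T (T + min (η/2) (b - T)), -(C/2) < M t := by
      intro t ht
      have h1 : t - T ≤ min (η/2) (b - T) := by linarith [ht.2]
      have h2 : 0 ≤ t - T := by linarith [ht.1]
      have h3 : min (η/2) (b - T) ≤ η/2 := min_le_left _ _
      exact hUsub ⟨hball (by rw [Metric.mem_ball, Real.dist_eq, abs_of_nonneg h2]; linarith),
        Set.mem_Ici.2 (hT.trans ht.1)⟩
    obtain ⟨D, hD⟩ : ∃ D : ℝ, D = 2/C := ⟨_, rfl⟩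
    have hD0 : (0:ℝ) ≤ D := by rw [hD]; positivity
    have hcb1 : (0:ℝ) ≤ (τ1+τ2)*B + τ3*(D*B) := by positivity
    have hcb2 : (0:ℝ) ≤ (κ1+κ2)*B + κ3*(D*B) := by positivity
    have hcb3 : (0:ℝ) ≤ (ψ1+ψ2)*B + ψ3*(D*B) := by positivity
    have hmon1 : (0:ℝ) ≤ τ1*B := by positivity
    have hmon2 : (0:ℝ) ≤ τ2*B := by positivity
    have hmon3 : (0:ℝ) ≤ τ3*(D*B) := by rw [hD]; positivity
    have hmon4 : (0:ℝ) ≤ κ1*B := by positivity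
    have hmon5 : (0:ℝ) ≤ κ2*B := by positivity
    have hmon6 : (0:ℝ) ≤ κ3*(D*B) := by rw [hD]; positivity
    have hmon7 : (0:ℝ) ≤ ψ1*B := by positivity
    have hmon8 : (0:ℝ) ≤ ψ2*B := by positivity
    have hmon9 : (0:ℝ) ≤ ψ3*(D*B) := by rw [hD]; positivity
    obtain ⟨K, hKdef⟩ : ∃ K : ℝ, K = β1+β2+β3+γ+γ1+γ2+γ3+ν1+ν2+ν3
      + 2*((τ1+τ2)*B + τ3*(D*B)) + 2*((κ1+κ2)*B + κ3*(D*B)) + 2*((ψ1+ψ2)*B + ψ3*(D*B))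
      + (τ1+τ2+κ1+κ2+ψ1+ψ2)*B + (τ3+κ3+ψ3)*(D*B) := ⟨_, rfl⟩
    have hK0 : (0:ℝ) ≤ K := by rw [hKdef, hD]; positivity
    refine ⟨K, hK0, ?_⟩
    intro t ht i hneg
    have ht0b : t ∈ Set.Icc (0:ℝ) b :=
      ⟨hT.trans ht.1, le_trans ht.2 (by linarith [min_le_right (η/2) (b - T)])⟩
    have habsSH : |S_H t| ≤ B := by simpa [hX] using hBle 0 t ht0b
    have habsEH : |E_H t| ≤ B := by simpa [hX] using hBle 1 t ht0b
    have habsIH : |I_H t| ≤ B := by simpa [hX] using hBle 2 t ht0b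
    have habsRH : |R_H t| ≤ B := by simpa [hX] using hBle 3 t ht0b
    have habsSF : |S_F t| ≤ B := by simpa [hX] using hBle 4 t ht0b
    have habsEF : |E_F t| ≤ B := by simpa [hX] using hBle 5 t ht0b
    have habsIF : |I_F t| ≤ B := by simpa [hX] using hBle 6 t ht0b
    have habsSD : |S_D t| ≤ B := by simpa [hX] using hBle 7 t ht0b
    have habsED : |E_D t| ≤ B := by simpa [hX] using hBle 8 t ht0b
    have habsID : |I_D t| ≤ B := by simpa [hX] using hBle 9 t ht0b
    have habsRD : |R_D t| ≤ B := by simpa [hX] using hBle 10 t ht0b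
    have habsM : |M t| ≤ B := by simpa [hX] using hBle 11 t ht0b
    have hbSH := abs_le.1 habsSH
    have hbIF := abs_le.1 habsIF
    have hbID := abs_le.1 habsID
    have hbSF := abs_le.1 habsSF
    have hbSD := abs_le.1 habsSD
    have hbM := abs_le.1 habsM
    have zSH : (0:ℝ) ≤ max 0 (-(S_H t)) := le_max_left _ _
    have zEH : (0:ℝ) ≤ max 0 (-(E_H t)) := le_max_left _ _
    have zIH : (0:ℝ) ≤ max 0 (-(I_H t)) := le_max_left _ _
    have zRH : (0:ℝ) ≤ max 0 (-(R_H t)) := le_max_left _ _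
    have zSF : (0:ℝ) ≤ max 0 (-(S_F t)) := le_max_left _ _
    have zEF : (0:ℝ) ≤ max 0 (-(E_F t)) := le_max_left _ _
    have zIF : (0:ℝ) ≤ max 0 (-(I_F t)) := le_max_left _ _
    have zSD : (0:ℝ) ≤ max 0 (-(S_D t)) := le_max_left _ _
    have zED : (0:ℝ) ≤ max 0 (-(E_D t)) := le_max_left _ _
    have zID : (0:ℝ) ≤ max 0 (-(I_D t)) := le_max_left _ _
    have zRD : (0:ℝ) ≤ max 0 (-(R_D t)) := le_max_left _ _
    have zM : (0:ℝ) ≤ max 0 (-(M t)) := le_max_left _ _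
    have gSH : -(S_H t) ≤ max 0 (-(S_H t)) := le_max_right _ _
    have gEH : -(E_H t) ≤ max 0 (-(E_H t)) := le_max_right _ _
    have gIH : -(I_H t) ≤ max 0 (-(I_H t)) := le_max_right _ _
    have gRH : -(R_H t) ≤ max 0 (-(R_H t)) := le_max_right _ _
    have gSF : -(S_F t) ≤ max 0 (-(S_F t)) := le_max_right _ _
    have gEF : -(E_F t) ≤ max 0 (-(E_F t)) := le_max_right _ _
    have gIF : -(I_F t) ≤ max 0 (-(I_F t)) := le_max_right _ _
    have gSD : -(S_D t) ≤ max 0 (-(S_D t)) := le_max_right _ _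
    have gED : -(E_D t) ≤ max 0 (-(E_D t)) := le_max_right _ _
    have gID : -(I_D t) ≤ max 0 (-(I_D t)) := le_max_right _ _
    have gRD : -(R_D t) ≤ max 0 (-(R_D t)) := le_max_right _ _
    have gM : -(M t) ≤ max 0 (-(M t)) := le_max_right _ _
    obtain ⟨NN, hNN⟩ : ∃ NN : ℝ, NN = max 0 (-(S_H t)) + max 0 (-(E_H t)) + max 0 (-(I_H t))
      + max 0 (-(R_H t)) + max 0 (-(S_F t)) + max 0 (-(E_F t)) + max 0 (-(I_F t))
      + max 0 (-(S_D t)) + max 0 (-(E_D t)) + max 0 (-(I_D t)) + max 0 (-(R_D t))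
      + max 0 (-(M t)) := ⟨_, rfl⟩
    have hNsum : (∑ j : Fin 12, max 0 (-(X j t))) = NN := by
      rw [hNN]
      simp only [hX, Fin.sum_univ_succ, Finset.univ_eq_empty, Finset.sum_empty,
        Matrix.cons_val_zero, Matrix.cons_val_succ]
      ring
    have hN0 : (0:ℝ) ≤ NN := by rw [hNN]; linarith
    have ubSH : max 0 (-(S_H t)) ≤ NN := by rw [hNN]; linarith
    have ubEH : max 0 (-(E_H t)) ≤ NN := by rw [hNN]; linarith
    have ubIH : max 0 (-(I_H t)) ≤ NN := by rw [hNN]; linarith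
    have ubRH : max 0 (-(R_H t)) ≤ NN := by rw [hNN]; linarith
    have ubSF : max 0 (-(S_F t)) ≤ NN := by rw [hNN]; linarith
    have ubEF : max 0 (-(E_F t)) ≤ NN := by rw [hNN]; linarith
    have ubIF : max 0 (-(I_F t)) ≤ NN := by rw [hNN]; linarith
    have ubSD : max 0 (-(S_D t)) ≤ NN := by rw [hNN]; linarith
    have ubED : max 0 (-(E_D t)) ≤ NN := by rw [hNN]; linarith
    have ubID : max 0 (-(I_D t)) ≤ NN := by rw [hNN]; linarith
    have ubRD : max 0 (-(R_D t)) ≤ NN := by rw [hNN]; linarith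
    have ubM : max 0 (-(M t)) ≤ NN := by rw [hNN]; linarith
    obtain ⟨hl1', hl2'0⟩ := lam_bounds hC hB0 (hMlow t ht).le habsM
    have hl1 : M t / (M t + C) ≤ D * B := by
      rw [hD, div_mul_eq_mul_div]; exact hl1'
    have hl2 : -(M t / (M t + C)) ≤ D * max 0 (-(M t)) := by rw [hD]; exact hl2'0
    have hnMB : max 0 (-(M t)) ≤ B := max_le hB0 (by linarith [hbM.1])
    have hl2' : -(D*B) ≤ M t / (M t + C) := by
      linarith [mul_le_mul_of_nonneg_left hnMB hD0]
    have habs1 : |τ1 * I_F t + τ2 * I_D t + τ3 * (M t / (M t + C))| ≤ (τ1+τ2)*B + τ3*(D*B) := by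
      rw [abs_le]
      constructor
      · linarith [mul_le_mul_of_nonneg_left hbIF.1 hτ1.le,
          mul_le_mul_of_nonneg_left hbID.1 hτ2.le, mul_le_mul_of_nonneg_left hl2' hτ3.le]
      · linarith [mul_le_mul_of_nonneg_left hbIF.2 hτ1.le,
          mul_le_mul_of_nonneg_left hbID.2 hτ2.le, mul_le_mul_of_nonneg_left hl1 hτ3.le]
    have habs2 : |κ1 * I_F t + κ2 * I_D t + κ3 * (M t / (M t + C))| ≤ (κ1+κ2)*B + κ3*(D*B) := by
      rw [abs_le]
      constructor
      · linarith [mul_le_mul_of_nonneg_left hbIF.1 hκ1.le,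
          mul_le_mul_of_nonneg_left hbID.1 hκ2.le, mul_le_mul_of_nonneg_left hl2' hκ3.le]
      · linarith [mul_le_mul_of_nonneg_left hbIF.2 hκ1.le,
          mul_le_mul_of_nonneg_left hbID.2 hκ2.le, mul_le_mul_of_nonneg_left hl1 hκ3.le]
    have h1ρ1 : (0:ℝ) < 1 + ρ1 := by linarith
    have h1ρ2 : (0:ℝ) < 1 + ρ2 := by linarith
    have h1ρ3 : (0:ℝ) < 1 + ρ3 := by linarith
    have hψu1 : ψ1 * I_F t / (1 + ρ1) ≤ ψ1 * B := by
      rw [div_le_iff₀ h1ρ1]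
      linarith [mul_le_mul_of_nonneg_left hbIF.2 hψ1.le,
        mul_nonneg (mul_nonneg hψ1.le hB0) hρ1.le]
    have hψl1 : -(ψ1 * B) ≤ ψ1 * I_F t / (1 + ρ1) := by
      rw [le_div_iff₀ h1ρ1]
      linarith [mul_le_mul_of_nonneg_left hbIF.1 hψ1.le,
        mul_nonneg (mul_nonneg hψ1.le hB0) hρ1.le]
    have hψu2 : ψ2 * I_D t / (1 + ρ2) ≤ ψ2 * B := by
      rw [div_le_iff₀ h1ρ2]
      linarith [mul_le_mul_of_nonneg_left hbID.2 hψ2.le,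
        mul_nonneg (mul_nonneg hψ2.le hB0) hρ2.le]
    have hψl2 : -(ψ2 * B) ≤ ψ2 * I_D t / (1 + ρ2) := by
      rw [le_div_iff₀ h1ρ2]
      linarith [mul_le_mul_of_nonneg_left hbID.1 hψ2.le,
        mul_nonneg (mul_nonneg hψ2.le hB0) hρ2.le]
    have hψu3 : ψ3 * (M t / (M t + C)) / (1 + ρ3) ≤ ψ3 * (D*B) := by
      rw [div_le_iff₀ h1ρ3]
      linarith [mul_le_mul_of_nonneg_left hl1 hψ3.le,
        mul_nonneg (mul_nonneg hψ3.le (by rw [hD]; positivity : (0:ℝ) ≤ D*B)) hρ3.le]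
    have hψl3 : -(ψ3 * (D*B)) ≤ ψ3 * (M t / (M t + C)) / (1 + ρ3) := by
      rw [le_div_iff₀ h1ρ3]
      linarith [mul_le_mul_of_nonneg_left hl2' hψ3.le,
        mul_nonneg (mul_nonneg hψ3.le (by rw [hD]; positivity : (0:ℝ) ≤ D*B)) hρ3.le]
    have habs3 : |ψ1 * I_F t / (1 + ρ1) + ψ2 * I_D t / (1 + ρ2)
        + ψ3 * (M t / (M t + C)) / (1 + ρ3)| ≤ (ψ1+ψ2)*B + ψ3*(D*B) := by
      rw [abs_le]
      constructor
      · linarith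
      · linarith
    have hnc1 : -(τ1 * I_F t + τ2 * I_D t + τ3 * (M t / (M t + C)))
        ≤ τ1 * max 0 (-(I_F t)) + τ2 * max 0 (-(I_D t)) + τ3 * (D * max 0 (-(M t))) := by
      linarith [mul_le_mul_of_nonneg_left gIF hτ1.le, mul_le_mul_of_nonneg_left gID hτ2.le,
        mul_le_mul_of_nonneg_left hl2 hτ3.le]
    have hnc2 : -(κ1 * I_F t + κ2 * I_D t + κ3 * (M t / (M t + C)))
        ≤ κ1 * max 0 (-(I_F t)) + κ2 * max 0 (-(I_D t)) + κ3 * (D * max 0 (-(M t))) := by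
      linarith [mul_le_mul_of_nonneg_left gIF hκ1.le, mul_le_mul_of_nonneg_left gID hκ2.le,
        mul_le_mul_of_nonneg_left hl2 hκ3.le]
    have hψd1 : -(ψ1 * I_F t / (1 + ρ1)) ≤ ψ1 * max 0 (-(I_F t)) := by
      rw [show -(ψ1 * I_F t / (1 + ρ1)) = -(ψ1 * I_F t) / (1 + ρ1) by ring, div_le_iff₀ h1ρ1]
      linarith [mul_le_mul_of_nonneg_left gIF hψ1.le,
        mul_nonneg (mul_nonneg hψ1.le zIF) hρ1.le]
    have hψd2 : -(ψ2 * I_D t / (1 + ρ2)) ≤ ψ2 * max 0 (-(I_D t)) := by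
      rw [show -(ψ2 * I_D t / (1 + ρ2)) = -(ψ2 * I_D t) / (1 + ρ2) by ring, div_le_iff₀ h1ρ2]
      linarith [mul_le_mul_of_nonneg_left gID hψ2.le,
        mul_nonneg (mul_nonneg hψ2.le zID) hρ2.le]
    have hψd3 : -(ψ3 * (M t / (M t + C)) / (1 + ρ3)) ≤ ψ3 * (D * max 0 (-(M t))) := by
      rw [show -(ψ3 * (M t / (M t + C)) / (1 + ρ3)) = -(ψ3 * (M t / (M t + C))) / (1 + ρ3)
        by ring, div_le_iff₀ h1ρ3]
      linarith [mul_le_mul_of_nonneg_left hl2 hψ3.le,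
        mul_nonneg (mul_nonneg hψ3.le (mul_nonneg hD0 zM)) hρ3.le]
    have hnc3 : -(ψ1 * I_F t / (1 + ρ1) + ψ2 * I_D t / (1 + ρ2)
          + ψ3 * (M t / (M t + C)) / (1 + ρ3))
        ≤ ψ1 * max 0 (-(I_F t)) + ψ2 * max 0 (-(I_D t)) + ψ3 * (D * max 0 (-(M t))) := by
      linarith
    have hdn1 : (0:ℝ) ≤ τ1 * max 0 (-(I_F t)) + τ2 * max 0 (-(I_D t))
        + τ3 * (D * max 0 (-(M t))) := by
      have := mul_nonneg hτ1.le zIF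
      have := mul_nonneg hτ2.le zID
      have := mul_nonneg hτ3.le (mul_nonneg hD0 zM)
      linarith
    have hdn2 : (0:ℝ) ≤ κ1 * max 0 (-(I_F t)) + κ2 * max 0 (-(I_D t))
        + κ3 * (D * max 0 (-(M t))) := by
      have := mul_nonneg hκ1.le zIF
      have := mul_nonneg hκ2.le zID
      have := mul_nonneg hκ3.le (mul_nonneg hD0 zM)
      linarith
    have hdn3 : (0:ℝ) ≤ ψ1 * max 0 (-(I_F t)) + ψ2 * max 0 (-(I_D t))
        + ψ3 * (D * max 0 (-(M t))) := by
      have := mul_nonneg hψ1.le zIF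
      have := mul_nonneg hψ2.le zID
      have := mul_nonneg hψ3.le (mul_nonneg hD0 zM)
      linarith
    rw [hNsum]
    fin_cases i
    -- case S_H
    · replace hneg : S_H t ≤ 0 := hneg
      show -(θ1 + β3 * R_H t - μ1 * S_H t - (τ1 * I_F t + τ2 * I_D t + τ3 * (M t / (M t + C))) * S_H t) ≤ K * NN
      have := S_case (r := R_H t) hθ1.le hμ1.le hβ3.le hneg habs1 gRH gSH zSH zRH ubRH ubSH hN0
        (by rw [hKdef]; linarith : β3 + ((τ1+τ2)*B + τ3*(D*B)) ≤ K)
      linarith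
    -- case E_H
    · replace hneg : E_H t ≤ 0 := hneg
      show -((τ1 * I_F t + τ2 * I_D t + τ3 * (M t / (M t + C))) * S_H t - (μ1 + β1 + β2) * E_H t) ≤ K * NN
      have hfin : (τ1 * max 0 (-(I_F t)) + τ2 * max 0 (-(I_D t)) + τ3 * (D * max 0 (-(M t)))) * B
          + ((τ1+τ2)*B + τ3*(D*B)) * max 0 (-(S_H t))
          ≤ (K) * NN := by
        have e1 := mul_le_mul_of_nonneg_left ubIF hmon1
        have e2 := mul_le_mul_of_nonneg_left ubID hmon2
        have e3 := mul_le_mul_of_nonneg_left ubM hmon3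
        have e4 := mul_le_mul_of_nonneg_left ubSH hcb1
        have e5 : (τ1*B + τ2*B + τ3*(D*B) + ((τ1+τ2)*B + τ3*(D*B))) * NN
            ≤ (K) * NN :=
          mul_le_mul_of_nonneg_right (by rw [hKdef]; linarith) hN0
        linarith [e1, e2, e3, e4, e5]
      have := E_case hneg (by linarith : (0:ℝ) ≤ μ1 + β1 + β2) hnc1 hdn1 habs1 hbSH.2 hB0
        gSH zSH hfin
      linarith
    -- case I_H
    · replace hneg : I_H t ≤ 0 := hneg
      show -(β1 * E_H t - (σ1 + μ1) * I_H t) ≤ K * NN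
      have := lin_case (b2 := 0) (b3 := 0) (e2 := (0:ℝ)) (e3 := (0:ℝ)) (n2 := (0:ℝ)) (n3 := (0:ℝ))
        hneg (by linarith : (0:ℝ) ≤ σ1 + μ1) hβ1.le le_rfl le_rfl gEH (by norm_num) (by norm_num)
        ubEH hN0 hN0 hN0 (show β1 + 0 + 0 ≤ K by rw [hKdef]; linarith)
      linarith
    -- case R_H
    · replace hneg : R_H t ≤ 0 := hneg
      show -(β2 * E_H t - (β3 + μ1) * R_H t) ≤ K * NN
      have := lin_case (b2 := 0) (b3 := 0) (e2 := (0:ℝ)) (e3 := (0:ℝ)) (n2 := (0:ℝ)) (n3 := (0:ℝ))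
        hneg (by linarith : (0:ℝ) ≤ β3 + μ1) hβ2.le le_rfl le_rfl gEH (by norm_num) (by norm_num)
        ubEH hN0 hN0 hN0 (show β2 + 0 + 0 ≤ K by rw [hKdef]; linarith)
      linarith
    -- case S_F
    · replace hneg : S_F t ≤ 0 := hneg
      show -(θ2 - (κ1 * I_F t + κ2 * I_D t + κ3 * (M t / (M t + C))) * S_F t - μ2 * S_F t) ≤ K * NN
      have := S_case (βr := 0) (r := (0:ℝ)) (nr := (0:ℝ)) hθ2.le hμ2.le le_rfl hneg habs2
        (by norm_num) gSF zSF (by norm_num) hN0 ubSF hN0 (show (0:ℝ) + ((κ1+κ2)*B + κ3*(D*B)) ≤ K by rw [hKdef]; linarith)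
      linarith
    -- case E_F
    · replace hneg : E_F t ≤ 0 := hneg
      show -((κ1 * I_F t + κ2 * I_D t + κ3 * (M t / (M t + C))) * S_F t - (μ2 + γ) * E_F t) ≤ K * NN
      have hfin : (κ1 * max 0 (-(I_F t)) + κ2 * max 0 (-(I_D t)) + κ3 * (D * max 0 (-(M t)))) * B
          + ((κ1+κ2)*B + κ3*(D*B)) * max 0 (-(S_F t))
          ≤ (K) * NN := by
        have e1 := mul_le_mul_of_nonneg_left ubIF hmon4
        have e2 := mul_le_mul_of_nonneg_left ubID hmon5
        have e3 := mul_le_mul_of_nonneg_left ubM hmon6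
        have e4 := mul_le_mul_of_nonneg_left ubSF hcb2
        have e5 : (κ1*B + κ2*B + κ3*(D*B) + ((κ1+κ2)*B + κ3*(D*B))) * NN
            ≤ (K) * NN :=
          mul_le_mul_of_nonneg_right (by rw [hKdef]; linarith) hN0
        linarith [e1, e2, e3, e4, e5]
      have := E_case hneg (by linarith : (0:ℝ) ≤ μ2 + γ) hnc2 hdn2 habs2 hbSF.2 hB0
        gSF zSF hfin
      linarith
    -- case I_F
    · replace hneg : I_F t ≤ 0 := hneg
      show -(γ * E_F t - (μ2 + σ2) * I_F t) ≤ K * NN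
      have := lin_case (b2 := 0) (b3 := 0) (e2 := (0:ℝ)) (e3 := (0:ℝ)) (n2 := (0:ℝ)) (n3 := (0:ℝ))
        hneg (by linarith : (0:ℝ) ≤ μ2 + σ2) hγ.le le_rfl le_rfl gEF (by norm_num) (by norm_num)
        ubEF hN0 hN0 hN0 (show γ + 0 + 0 ≤ K by rw [hKdef]; linarith)
      linarith
    -- case S_D
    · replace hneg : S_D t ≤ 0 := hneg
      show -(θ3 - μ3 * S_D t - (ψ1 * I_F t / (1 + ρ1) + ψ2 * I_D t / (1 + ρ2) + ψ3 * (M t / (M t + C)) / (1 + ρ3)) * S_D t + γ3 * R_D t) ≤ K * NN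
      have := S_case (r := R_D t) hθ3.le hμ3.le hγ3.le hneg habs3 gRD gSD zSD zRD ubRD ubSD hN0
        (by rw [hKdef]; linarith : γ3 + ((ψ1+ψ2)*B + ψ3*(D*B)) ≤ K)
      linarith
    -- case E_D
    · replace hneg : E_D t ≤ 0 := hneg
      show -((ψ1 * I_F t / (1 + ρ1) + ψ2 * I_D t / (1 + ρ2) + ψ3 * (M t / (M t + C)) / (1 + ρ3)) * S_D t - (μ3 + γ1 + γ2) * E_D t) ≤ K * NN
      have hfin : (ψ1 * max 0 (-(I_F t)) + ψ2 * max 0 (-(I_D t)) + ψ3 * (D * max 0 (-(M t)))) * B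
          + ((ψ1+ψ2)*B + ψ3*(D*B)) * max 0 (-(S_D t))
          ≤ (K) * NN := by
        have e1 := mul_le_mul_of_nonneg_left ubIF hmon7
        have e2 := mul_le_mul_of_nonneg_left ubID hmon8
        have e3 := mul_le_mul_of_nonneg_left ubM hmon9
        have e4 := mul_le_mul_of_nonneg_left ubSD hcb3
        have e5 : (ψ1*B + ψ2*B + ψ3*(D*B) + ((ψ1+ψ2)*B + ψ3*(D*B))) * NN
            ≤ (K) * NN :=
          mul_le_mul_of_nonneg_right (by rw [hKdef]; linarith) hN0
        linarith [e1, e2, e3, e4, e5]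
      have := E_case hneg (by linarith : (0:ℝ) ≤ μ3 + γ1 + γ2) hnc3 hdn3 habs3 hbSD.2 hB0
        gSD zSD hfin
      linarith
    -- case I_D
    · replace hneg : I_D t ≤ 0 := hneg
      show -(γ1 * E_D t - (μ3 + σ3) * I_D t) ≤ K * NN
      have := lin_case (b2 := 0) (b3 := 0) (e2 := (0:ℝ)) (e3 := (0:ℝ)) (n2 := (0:ℝ)) (n3 := (0:ℝ))
        hneg (by linarith : (0:ℝ) ≤ μ3 + σ3) hγ1.le le_rfl le_rfl gED (by norm_num) (by norm_num)
        ubED hN0 hN0 hN0 (show γ1 + 0 + 0 ≤ K by rw [hKdef]; linarith)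
      linarith
    -- case R_D
    · replace hneg : R_D t ≤ 0 := hneg
      show -(γ2 * E_D t - (μ3 + γ3) * R_D t) ≤ K * NN
      have := lin_case (b2 := 0) (b3 := 0) (e2 := (0:ℝ)) (e3 := (0:ℝ)) (n2 := (0:ℝ)) (n3 := (0:ℝ))
        hneg (by linarith : (0:ℝ) ≤ μ3 + γ3) hγ2.le le_rfl le_rfl gED (by norm_num) (by norm_num)
        ubED hN0 hN0 hN0 (show γ2 + 0 + 0 ≤ K by rw [hKdef]; linarith)
      linarith
    -- case M
    · replace hneg : M t ≤ 0 := hneg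
      show -(ν1 * I_H t + ν2 * I_F t + ν3 * I_D t - μ4 * M t) ≤ K * NN
      have := lin_case hneg hμ4.le hν1.le hν2.le hν3.le gIH gIF gID ubIH ubIF ubID hN0
        (by rw [hKdef]; linarith : ν1 + ν2 + ν3 ≤ K)
      linarith
  have hQ := nonneg_global X V hdX h0X hloc
  have hSHn : ∀ s, 0 ≤ s → 0 ≤ S_H s := fun s hs => by simpa [hX] using hQ s hs 0
  have hEHn : ∀ s, 0 ≤ s → 0 ≤ E_H s := fun s hs => by simpa [hX] using hQ s hs 1
  have hIHn : ∀ s, 0 ≤ s → 0 ≤ I_H s := fun s hs => by simpa [hX] using hQ s hs 2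
  have hRHn : ∀ s, 0 ≤ s → 0 ≤ R_H s := fun s hs => by simpa [hX] using hQ s hs 3
  have hSFn : ∀ s, 0 ≤ s → 0 ≤ S_F s := fun s hs => by simpa [hX] using hQ s hs 4
  have hEFn : ∀ s, 0 ≤ s → 0 ≤ E_F s := fun s hs => by simpa [hX] using hQ s hs 5
  have hIFn : ∀ s, 0 ≤ s → 0 ≤ I_F s := fun s hs => by simpa [hX] using hQ s hs 6
  have hSDn : ∀ s, 0 ≤ s → 0 ≤ S_D s := fun s hs => by simpa [hX] using hQ s hs 7
  have hEDn : ∀ s, 0 ≤ s → 0 ≤ E_D s := fun s hs => by simpa [hX] using hQ s hs 8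
  have hIDn : ∀ s, 0 ≤ s → 0 ≤ I_D s := fun s hs => by simpa [hX] using hQ s hs 9
  have hRDn : ∀ s, 0 ≤ s → 0 ≤ R_D s := fun s hs => by simpa [hX] using hQ s hs 10
  have hMn : ∀ s, 0 ≤ s → 0 ≤ M s := fun s hs => by simpa [hX] using hQ s hs 11
  intro t₁ ht₁
  -- bounds for I_F and I_D on [0, t₁]
  have hcIF : ContinuousOn I_F (Set.Icc 0 t₁) := fun s hs =>
    ((hodeIF s hs.1).continuousWithinAt).mono (fun z hz => hz.1)
  have hcID : ContinuousOn I_D (Set.Icc 0 t₁) := fun s hs =>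
    ((hodeID s hs.1).continuousWithinAt).mono (fun z hz => hz.1)
  obtain ⟨B1, hB1⟩ := isCompact_Icc.exists_bound_of_continuousOn hcIF
  obtain ⟨B2, hB2⟩ := isCompact_Icc.exists_bound_of_continuousOn hcID
  have hIFb : ∀ s ∈ Set.Icc (0:ℝ) t₁, I_F s ≤ |B1| + |B2| := by
    intro s hs
    have := hB1 s hs
    rw [Real.norm_eq_abs] at this
    linarith [le_abs_self (I_F s), le_abs_self B1, abs_nonneg B2]
  have hIDb : ∀ s ∈ Set.Icc (0:ℝ) t₁, I_D s ≤ |B1| + |B2| := by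
    intro s hs
    have := hB2 s hs
    rw [Real.norm_eq_abs] at this
    linarith [le_abs_self (I_D s), le_abs_self B2, abs_nonneg B1]
  have hlam01 : ∀ s, 0 ≤ s → 0 ≤ M s / (M s + C) ∧ M s / (M s + C) ≤ 1 := by
    intro s hs
    have hM := hMn s hs
    constructor
    · exact div_nonneg hM (by linarith)
    · exact div_le_one_of_le₀ (by linarith) (by linarith)
  refine ⟨?_, ?_, hEHn t₁ ht₁, hIHn t₁ ht₁, hRHn t₁ ht₁, hEFn t₁ ht₁, hIFn t₁ ht₁,
    hSDn t₁ ht₁, hEDn t₁ ht₁, hIDn t₁ ht₁, hRDn t₁ ht₁, hMn t₁ ht₁⟩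
  · apply strict_pos_exp (K := μ1 + τ1*(|B1| + |B2|) + τ2*(|B1| + |B2|) + τ3) ht₁
      (fun s hs => hodeSH s hs.1) _ hSH0
    intro s hs
    obtain ⟨hlm0, hlm1⟩ := hlam01 s hs.1
    have hR := hRHn s hs.1
    have hS := hSHn s hs.1
    have h1 := hIFb s hs
    have h2 := hIDb s hs
    linarith [mul_nonneg hβ3.le hR,
      mul_nonneg (mul_nonneg hτ1.le (by linarith : (0:ℝ) ≤ |B1| + |B2| - I_F s)) hS,
      mul_nonneg (mul_nonneg hτ2.le (by linarith : (0:ℝ) ≤ |B1| + |B2| - I_D s)) hS,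
      mul_nonneg (mul_nonneg hτ3.le (by linarith : (0:ℝ) ≤ 1 - M s / (M s + C))) hS]
  · apply strict_pos_exp (K := μ2 + κ1*(|B1| + |B2|) + κ2*(|B1| + |B2|) + κ3) ht₁
      (fun s hs => hodeSF s hs.1) _ hSF0
    intro s hs
    obtain ⟨hlm0, hlm1⟩ := hlam01 s hs.1
    have hS := hSFn s hs.1
    have h1 := hIFb s hs
    have h2 := hIDb s hs
    linarith [mul_nonneg (mul_nonneg hκ1.le (by linarith : (0:ℝ) ≤ |B1| + |B2| - I_F s)) hS,
      mul_nonneg (mul_nonneg hκ2.le (by linarith : (0:ℝ) ≤ |B1| + |B2| - I_D s)) hS,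
      mul_nonneg (mul_nonneg hκ3.le (by linarith : (0:ℝ) ≤ 1 - M s / (M s + C))) hS]
end

section
/- Boundedness of the free-range dog population (part of Theorem 2): Let S_F, E_F, I_F be the free-range dog components of a solution of the rabies model on [0, ∞) with all twelve components nonnegative on [0, ∞), and set N_F(t) = S_F(t) + E_F(t) + I_F(t). Then N_F'(t) = θ2 − μ2·N_F(t) − σ2·I_F(t) ≤ θ2 − μ2·N_F(t) for all t ≥ 0, and if N_F(0) ≤ θ2/μ2 then N_F(t) ≤ θ2/μ2 for all t ≥ 0. -/
theorem free_range_dog_boundedness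
    (θ1 θ2 θ3 τ1 τ2 τ3 β1 β2 β3 μ1 μ2 μ3 μ4 σ1 σ2 σ3 κ1 κ2 κ3 γ γ1 γ2 γ3 ψ1 ψ2 ψ3 ρ1 ρ2 ρ3 ν1 ν2 ν3 C : ℝ)
    (hθ1 : 0 < θ1)
    (hθ2 : 0 < θ2)
    (hθ3 : 0 < θ3)
    (hτ1 : 0 < τ1)
    (hτ2 : 0 < τ2)
    (hτ3 : 0 < τ3)
    (hβ1 : 0 < β1)
    (hβ2 : 0 < β2)
    (hβ3 : 0 < β3)
    (hμ1 : 0 < μ1)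
    (hμ2 : 0 < μ2)
    (hμ3 : 0 < μ3)
    (hμ4 : 0 < μ4)
    (hσ1 : 0 < σ1)
    (hσ2 : 0 < σ2)
    (hσ3 : 0 < σ3)
    (hκ1 : 0 < κ1)
    (hκ2 : 0 < κ2)
    (hκ3 : 0 < κ3)
    (hγ : 0 < γ)
    (hγ1 : 0 < γ1)
    (hγ2 : 0 < γ2)
    (hγ3 : 0 < γ3)
    (hψ1 : 0 < ψ1)
    (hψ2 : 0 < ψ2)
    (hψ3 : 0 < ψ3)
    (hρ1 : 0 < ρ1)
    (hρ2 : 0 < ρ2)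
    (hρ3 : 0 < ρ3)
    (hν1 : 0 < ν1)
    (hν2 : 0 < ν2)
    (hν3 : 0 < ν3)
    (hC : 0 < C)
    (S_H E_H I_H R_H S_F E_F I_F S_D E_D I_D R_D M : ℝ → ℝ)
    (hodeSH : ∀ t ∈ Set.Ici (0:ℝ), HasDerivWithinAt S_H
        (θ1 + β3 * R_H t - μ1 * S_H t - (τ1 * I_F t + τ2 * I_D t + τ3 * (M t / (M t + C))) * S_H t) (Set.Ici 0) t)
    (hodeEH : ∀ t ∈ Set.Ici (0:ℝ), HasDerivWithinAt E_H
        ((τ1 * I_F t + τ2 * I_D t + τ3 * (M t / (M t + C))) * S_H t - (μ1 + β1 + β2) * E_H t) (Set.Ici 0) t)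
    (hodeIH : ∀ t ∈ Set.Ici (0:ℝ), HasDerivWithinAt I_H
        (β1 * E_H t - (σ1 + μ1) * I_H t) (Set.Ici 0) t)
    (hodeRH : ∀ t ∈ Set.Ici (0:ℝ), HasDerivWithinAt R_H
        (β2 * E_H t - (β3 + μ1) * R_H t) (Set.Ici 0) t)
    (hodeSF : ∀ t ∈ Set.Ici (0:ℝ), HasDerivWithinAt S_F
        (θ2 - (κ1 * I_F t + κ2 * I_D t + κ3 * (M t / (M t + C))) * S_F t - μ2 * S_F t) (Set.Ici 0) t)
    (hodeEF : ∀ t ∈ Set.Ici (0:ℝ), HasDerivWithinAt E_F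
        ((κ1 * I_F t + κ2 * I_D t + κ3 * (M t / (M t + C))) * S_F t - (μ2 + γ) * E_F t) (Set.Ici 0) t)
    (hodeIF : ∀ t ∈ Set.Ici (0:ℝ), HasDerivWithinAt I_F
        (γ * E_F t - (μ2 + σ2) * I_F t) (Set.Ici 0) t)
    (hodeSD : ∀ t ∈ Set.Ici (0:ℝ), HasDerivWithinAt S_D
        (θ3 - μ3 * S_D t - (ψ1 * I_F t / (1 + ρ1) + ψ2 * I_D t / (1 + ρ2) + ψ3 * (M t / (M t + C)) / (1 + ρ3)) * S_D t + γ3 * R_D t) (Set.Ici 0) t)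
    (hodeED : ∀ t ∈ Set.Ici (0:ℝ), HasDerivWithinAt E_D
        ((ψ1 * I_F t / (1 + ρ1) + ψ2 * I_D t / (1 + ρ2) + ψ3 * (M t / (M t + C)) / (1 + ρ3)) * S_D t - (μ3 + γ1 + γ2) * E_D t) (Set.Ici 0) t)
    (hodeID : ∀ t ∈ Set.Ici (0:ℝ), HasDerivWithinAt I_D
        (γ1 * E_D t - (μ3 + σ3) * I_D t) (Set.Ici 0) t)
    (hodeRD : ∀ t ∈ Set.Ici (0:ℝ), HasDerivWithinAt R_D
        (γ2 * E_D t - (μ3 + γ3) * R_D t) (Set.Ici 0) t)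
    (hodeM : ∀ t ∈ Set.Ici (0:ℝ), HasDerivWithinAt M
        (ν1 * I_H t + ν2 * I_F t + ν3 * I_D t - μ4 * M t) (Set.Ici 0) t)
    (hnn : ∀ t ≥ (0:ℝ), 0 ≤ S_H t ∧ 0 ≤ E_H t ∧ 0 ≤ I_H t ∧ 0 ≤ R_H t ∧ 0 ≤ S_F t ∧ 0 ≤ E_F t ∧ 0 ≤ I_F t ∧ 0 ≤ S_D t ∧ 0 ≤ E_D t ∧ 0 ≤ I_D t ∧ 0 ≤ R_D t ∧ 0 ≤ M t)
    :
    (∀ t ∈ Set.Ici (0:ℝ), HasDerivWithinAt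
      (fun s => S_F s + E_F s + I_F s)
      (θ2 - μ2 * (S_F t + E_F t + I_F t) - σ2 * I_F t) (Set.Ici 0) t) ∧
    (∀ t ≥ (0:ℝ), θ2 - μ2 * (S_F t + E_F t + I_F t) - σ2 * I_F t ≤
      θ2 - μ2 * (S_F t + E_F t + I_F t)) ∧
    (S_F 0 + E_F 0 + I_F 0 ≤ θ2 / μ2 →
      ∀ t ≥ (0:ℝ), S_F t + E_F t + I_F t ≤ θ2 / μ2) := by

  have hN : ∀ t ∈ Set.Ici (0:ℝ), HasDerivWithinAt (fun s => S_F s + E_F s + I_F s)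
      (θ2 - μ2 * (S_F t + E_F t + I_F t) - σ2 * I_F t) (Set.Ici 0) t := by
    intro t ht
    have h := ((hodeSF t ht).add (hodeEF t ht)).add (hodeIF t ht)
    exact h.congr_deriv (by ring)
  refine ⟨hN, ?_, ?_⟩
  · intro t ht
    have h := (hnn t ht).2.2.2.2.2.2.1
    nlinarith [hσ2]
  · intro h0 t ht
    set Q := θ2 / μ2 with hQ
    set F : ℝ → ℝ := fun s => Real.exp (μ2 * s) * (S_F s + E_F s + I_F s - Q) with hF
    have hFd : ∀ s ∈ Set.Ici (0:ℝ), HasDerivWithinAt F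
        (-(Real.exp (μ2 * s) * (σ2 * I_F s))) (Set.Ici 0) s := by
      intro s hs
      have he : HasDerivWithinAt (fun u => Real.exp (μ2 * u)) (μ2 * Real.exp (μ2 * s)) (Set.Ici 0) s := by
        exact (((hasDerivAt_id s).const_mul μ2).exp.hasDerivWithinAt).congr_deriv (by simp [mul_comm])
      have hg : HasDerivWithinAt (fun u => S_F u + E_F u + I_F u - Q)
          (θ2 - μ2 * (S_F s + E_F s + I_F s) - σ2 * I_F s) (Set.Ici 0) s :=
        (hN s hs).sub_const Q
      have hQ2 : μ2 * Q = θ2 := by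
        rw [hQ]; field_simp
      have := he.mul hg
      exact this.congr_deriv (by rw [← hQ2]; ring)
    have hFanti : AntitoneOn F (Set.Ici (0:ℝ)) := by
      apply antitoneOn_of_hasDerivWithinAt_nonpos (convex_Ici 0)
        (f' := fun s => -(Real.exp (μ2 * s) * (σ2 * I_F s)))
      · intro s hs
        exact (hFd s hs).continuousWithinAt
      · intro s hs
        rw [interior_Ici] at hs ⊢
        exact (hFd s (Set.Ioi_subset_Ici_self hs)).mono Set.Ioi_subset_Ici_self
      · intro s hs
        rw [interior_Ici] at hs
        have hI := (hnn s (le_of_lt hs)).2.2.2.2.2.2.1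
        exact neg_nonpos.mpr (mul_nonneg (Real.exp_nonneg _) (mul_nonneg hσ2.le hI))
    have hFt := hFanti (Set.self_mem_Ici) ht ht
    have hF0 : F 0 ≤ 0 := by
      have : F 0 = S_F 0 + E_F 0 + I_F 0 - Q := by
        rw [hF]; simp
      rw [this]; linarith
    have hFt0 : Real.exp (μ2 * t) * (S_F t + E_F t + I_F t - Q) ≤ 0 := le_trans hFt hF0
    have hexp := Real.exp_pos (μ2 * t)
    have : S_F t + E_F t + I_F t - Q ≤ 0 := nonpos_of_mul_nonpos_right hFt0 hexp
    rw [hQ] at this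
    linarith
end

section
/- Boundedness of the domestic dog population (part of Theorem 2): Let S_D, E_D, I_D, R_D be the domestic dog components of a solution of the rabies model on [0, ∞) with all twelve components nonnegative on [0, ∞), and set N_D(t) = S_D(t) + E_D(t) + I_D(t) + R_D(t). Then N_D'(t) = θ3 − μ3·N_D(t) − σ3·I_D(t) ≤ θ3 − μ3·N_D(t) for all t ≥ 0, and if N_D(0) ≤ θ3/μ3 then N_D(t) ≤ θ3/μ3 for all t ≥ 0. -/
theorem domestic_dog_boundedness
    (θ1 θ2 θ3 τ1 τ2 τ3 β1 β2 β3 μ1 μ2 μ3 μ4 σ1 σ2 σ3 κ1 κ2 κ3 γ γ1 γ2 γ3 ψ1 ψ2 ψ3 ρ1 ρ2 ρ3 ν1 ν2 ν3 C : ℝ)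
    (hθ1 : 0 < θ1)
    (hθ2 : 0 < θ2)
    (hθ3 : 0 < θ3)
    (hτ1 : 0 < τ1)
    (hτ2 : 0 < τ2)
    (hτ3 : 0 < τ3)
    (hβ1 : 0 < β1)
    (hβ2 : 0 < β2)
    (hβ3 : 0 < β3)
    (hμ1 : 0 < μ1)
    (hμ2 : 0 < μ2)
    (hμ3 : 0 < μ3)
    (hμ4 : 0 < μ4)
    (hσ1 : 0 < σ1)
    (hσ2 : 0 < σ2)
    (hσ3 : 0 < σ3)
    (hκ1 : 0 < κ1)
    (hκ2 : 0 < κ2)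
    (hκ3 : 0 < κ3)
    (hγ : 0 < γ)
    (hγ1 : 0 < γ1)
    (hγ2 : 0 < γ2)
    (hγ3 : 0 < γ3)
    (hψ1 : 0 < ψ1)
    (hψ2 : 0 < ψ2)
    (hψ3 : 0 < ψ3)
    (hρ1 : 0 < ρ1)
    (hρ2 : 0 < ρ2)
    (hρ3 : 0 < ρ3)
    (hν1 : 0 < ν1)
    (hν2 : 0 < ν2)
    (hν3 : 0 < ν3)
    (hC : 0 < C)
    (S_H E_H I_H R_H S_F E_F I_F S_D E_D I_D R_D M : ℝ → ℝ)
    (hodeSH : ∀ t ∈ Set.Ici (0:ℝ), HasDerivWithinAt S_H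
        (θ1 + β3 * R_H t - μ1 * S_H t - (τ1 * I_F t + τ2 * I_D t + τ3 * (M t / (M t + C))) * S_H t) (Set.Ici 0) t)
    (hodeEH : ∀ t ∈ Set.Ici (0:ℝ), HasDerivWithinAt E_H
        ((τ1 * I_F t + τ2 * I_D t + τ3 * (M t / (M t + C))) * S_H t - (μ1 + β1 + β2) * E_H t) (Set.Ici 0) t)
    (hodeIH : ∀ t ∈ Set.Ici (0:ℝ), HasDerivWithinAt I_H
        (β1 * E_H t - (σ1 + μ1) * I_H t) (Set.Ici 0) t)
    (hodeRH : ∀ t ∈ Set.Ici (0:ℝ), HasDerivWithinAt R_H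
        (β2 * E_H t - (β3 + μ1) * R_H t) (Set.Ici 0) t)
    (hodeSF : ∀ t ∈ Set.Ici (0:ℝ), HasDerivWithinAt S_F
        (θ2 - (κ1 * I_F t + κ2 * I_D t + κ3 * (M t / (M t + C))) * S_F t - μ2 * S_F t) (Set.Ici 0) t)
    (hodeEF : ∀ t ∈ Set.Ici (0:ℝ), HasDerivWithinAt E_F
        ((κ1 * I_F t + κ2 * I_D t + κ3 * (M t / (M t + C))) * S_F t - (μ2 + γ) * E_F t) (Set.Ici 0) t)
    (hodeIF : ∀ t ∈ Set.Ici (0:ℝ), HasDerivWithinAt I_F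
        (γ * E_F t - (μ2 + σ2) * I_F t) (Set.Ici 0) t)
    (hodeSD : ∀ t ∈ Set.Ici (0:ℝ), HasDerivWithinAt S_D
        (θ3 - μ3 * S_D t - (ψ1 * I_F t / (1 + ρ1) + ψ2 * I_D t / (1 + ρ2) + ψ3 * (M t / (M t + C)) / (1 + ρ3)) * S_D t + γ3 * R_D t) (Set.Ici 0) t)
    (hodeED : ∀ t ∈ Set.Ici (0:ℝ), HasDerivWithinAt E_D
        ((ψ1 * I_F t / (1 + ρ1) + ψ2 * I_D t / (1 + ρ2) + ψ3 * (M t / (M t + C)) / (1 + ρ3)) * S_D t - (μ3 + γ1 + γ2) * E_D t) (Set.Ici 0) t)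
    (hodeID : ∀ t ∈ Set.Ici (0:ℝ), HasDerivWithinAt I_D
        (γ1 * E_D t - (μ3 + σ3) * I_D t) (Set.Ici 0) t)
    (hodeRD : ∀ t ∈ Set.Ici (0:ℝ), HasDerivWithinAt R_D
        (γ2 * E_D t - (μ3 + γ3) * R_D t) (Set.Ici 0) t)
    (hodeM : ∀ t ∈ Set.Ici (0:ℝ), HasDerivWithinAt M
        (ν1 * I_H t + ν2 * I_F t + ν3 * I_D t - μ4 * M t) (Set.Ici 0) t)
    (hnn : ∀ t ≥ (0:ℝ), 0 ≤ S_H t ∧ 0 ≤ E_H t ∧ 0 ≤ I_H t ∧ 0 ≤ R_H t ∧ 0 ≤ S_F t ∧ 0 ≤ E_F t ∧ 0 ≤ I_F t ∧ 0 ≤ S_D t ∧ 0 ≤ E_D t ∧ 0 ≤ I_D t ∧ 0 ≤ R_D t ∧ 0 ≤ M t)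
    :
    (∀ t ∈ Set.Ici (0:ℝ), HasDerivWithinAt
      (fun s => S_D s + E_D s + I_D s + R_D s)
      (θ3 - μ3 * (S_D t + E_D t + I_D t + R_D t) - σ3 * I_D t) (Set.Ici 0) t) ∧
    (∀ t ≥ (0:ℝ), θ3 - μ3 * (S_D t + E_D t + I_D t + R_D t) - σ3 * I_D t ≤
      θ3 - μ3 * (S_D t + E_D t + I_D t + R_D t)) ∧
    (S_D 0 + E_D 0 + I_D 0 + R_D 0 ≤ θ3 / μ3 →
      ∀ t ≥ (0:ℝ), S_D t + E_D t + I_D t + R_D t ≤ θ3 / μ3) := by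

  have hN : ∀ t ∈ Set.Ici (0:ℝ), HasDerivWithinAt
      (fun s => S_D s + E_D s + I_D s + R_D s)
      (θ3 - μ3 * (S_D t + E_D t + I_D t + R_D t) - σ3 * I_D t) (Set.Ici 0) t := by
    intro t ht
    have h := (((hodeSD t ht).add (hodeED t ht)).add (hodeID t ht)).add (hodeRD t ht)
    convert h using 1
    · rfl
    · rfl
    · rfl
    ring
  refine ⟨hN, ?_, ?_⟩
  · intro t ht
    have hI : 0 ≤ I_D t := (hnn t ht).2.2.2.2.2.2.2.2.2.1
    nlinarith [mul_nonneg hσ3.le hI]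
  · intro h0 t ht
    set c := θ3 / μ3 with hc
    have hμc : μ3 * c = θ3 := by rw [hc]; field_simp
    set g : ℝ → ℝ := fun s => (S_D s + E_D s + I_D s + R_D s - c) * Real.exp (μ3 * s) with hg
    have hg' : ∀ s ∈ Set.Ici (0:ℝ), HasDerivWithinAt g
        (-(σ3 * I_D s) * Real.exp (μ3 * s)) (Set.Ici 0) s := by
      intro s hs
      have h1 := (hN s hs).sub_const c
      have h2 : HasDerivWithinAt (fun x => Real.exp (μ3 * x))
          (μ3 * Real.exp (μ3 * s)) (Set.Ici 0) s := by
        have := ((hasDerivAt_id s).const_mul μ3).exp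
        simpa [mul_comm] using this.hasDerivWithinAt
      have := h1.mul h2
      convert this using 1
      · rfl
      · rfl
      · rfl
      linear_combination Real.exp (μ3 * s) * hμc
    have hga : AntitoneOn g (Set.Ici (0:ℝ)) := by
      apply antitoneOn_of_hasDerivWithinAt_nonpos (convex_Ici 0)
      · exact fun s hs => (hg' s hs).continuousWithinAt
      · intro s hs
        rw [interior_Ici] at hs ⊢
        exact (hg' s (Set.mem_Ici.mpr (le_of_lt hs))).mono Set.Ioi_subset_Ici_self
      · intro s hs
        rw [interior_Ici] at hs
        have hI : 0 ≤ I_D s := (hnn s hs.le).2.2.2.2.2.2.2.2.2.1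
        have := Real.exp_pos (μ3 * s)
        nlinarith [mul_nonneg hσ3.le hI]
    have hgt : g t ≤ g 0 := hga Set.self_mem_Ici ht ht
    have hg0 : g 0 ≤ 0 := by
      simp only [hg, mul_zero, Real.exp_zero, mul_one]
      linarith
    have hle : (S_D t + E_D t + I_D t + R_D t - c) * Real.exp (μ3 * t) ≤ 0 := hgt.trans hg0
    have hept : 0 < Real.exp (μ3 * t) := Real.exp_pos _
    have hle' : (S_D t + E_D t + I_D t + R_D t - c) * Real.exp (μ3 * t) ≤
        0 * Real.exp (μ3 * t) := by simpa using hle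
    have h2 : S_D t + E_D t + I_D t + R_D t - c ≤ 0 :=
      le_of_mul_le_mul_right hle' hept
    linarith
end

section
/- Exponential decay estimate for the total human population (consequence of equations (13)–(16) in the proof of Theorem 2): Let S_H, E_H, I_H, R_H be the human components of a solution of the rabies model on [0, ∞) with I_H(t) ≥ 0 for all t ≥ 0, and set N_H(t) = S_H(t) + E_H(t) + I_H(t) + R_H(t). Then N_H(t) ≤ θ1/μ1 + (N_H(0) − θ1/μ1)·e^{−μ1·t} for all t ≥ 0; in particular, if N_H(0) ≥ 0 then N_H(t) ≤ max{θ1/μ1, N_H(0)} for all t ≥ 0. -/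
theorem human_population_decay
    (θ1 θ2 θ3 τ1 τ2 τ3 β1 β2 β3 μ1 μ2 μ3 μ4 σ1 σ2 σ3 κ1 κ2 κ3 γ γ1 γ2 γ3 ψ1 ψ2 ψ3 ρ1 ρ2 ρ3 ν1 ν2 ν3 C : ℝ)
    (hθ1 : 0 < θ1)
    (hθ2 : 0 < θ2)
    (hθ3 : 0 < θ3)
    (hτ1 : 0 < τ1)
    (hτ2 : 0 < τ2)
    (hτ3 : 0 < τ3)
    (hβ1 : 0 < β1)
    (hβ2 : 0 < β2)
    (hβ3 : 0 < β3)
    (hμ1 : 0 < μ1)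
    (hμ2 : 0 < μ2)
    (hμ3 : 0 < μ3)
    (hμ4 : 0 < μ4)
    (hσ1 : 0 < σ1)
    (hσ2 : 0 < σ2)
    (hσ3 : 0 < σ3)
    (hκ1 : 0 < κ1)
    (hκ2 : 0 < κ2)
    (hκ3 : 0 < κ3)
    (hγ : 0 < γ)
    (hγ1 : 0 < γ1)
    (hγ2 : 0 < γ2)
    (hγ3 : 0 < γ3)
    (hψ1 : 0 < ψ1)
    (hψ2 : 0 < ψ2)
    (hψ3 : 0 < ψ3)
    (hρ1 : 0 < ρ1)
    (hρ2 : 0 < ρ2)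
    (hρ3 : 0 < ρ3)
    (hν1 : 0 < ν1)
    (hν2 : 0 < ν2)
    (hν3 : 0 < ν3)
    (hC : 0 < C)
    (S_H E_H I_H R_H S_F E_F I_F S_D E_D I_D R_D M : ℝ → ℝ)
    (hodeSH : ∀ t ∈ Set.Ici (0:ℝ), HasDerivWithinAt S_H
        (θ1 + β3 * R_H t - μ1 * S_H t - (τ1 * I_F t + τ2 * I_D t + τ3 * (M t / (M t + C))) * S_H t) (Set.Ici 0) t)
    (hodeEH : ∀ t ∈ Set.Ici (0:ℝ), HasDerivWithinAt E_H
        ((τ1 * I_F t + τ2 * I_D t + τ3 * (M t / (M t + C))) * S_H t - (μ1 + β1 + β2) * E_H t) (Set.Ici 0) t)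
    (hodeIH : ∀ t ∈ Set.Ici (0:ℝ), HasDerivWithinAt I_H
        (β1 * E_H t - (σ1 + μ1) * I_H t) (Set.Ici 0) t)
    (hodeRH : ∀ t ∈ Set.Ici (0:ℝ), HasDerivWithinAt R_H
        (β2 * E_H t - (β3 + μ1) * R_H t) (Set.Ici 0) t)
    (hodeSF : ∀ t ∈ Set.Ici (0:ℝ), HasDerivWithinAt S_F
        (θ2 - (κ1 * I_F t + κ2 * I_D t + κ3 * (M t / (M t + C))) * S_F t - μ2 * S_F t) (Set.Ici 0) t)
    (hodeEF : ∀ t ∈ Set.Ici (0:ℝ), HasDerivWithinAt E_F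
        ((κ1 * I_F t + κ2 * I_D t + κ3 * (M t / (M t + C))) * S_F t - (μ2 + γ) * E_F t) (Set.Ici 0) t)
    (hodeIF : ∀ t ∈ Set.Ici (0:ℝ), HasDerivWithinAt I_F
        (γ * E_F t - (μ2 + σ2) * I_F t) (Set.Ici 0) t)
    (hodeSD : ∀ t ∈ Set.Ici (0:ℝ), HasDerivWithinAt S_D
        (θ3 - μ3 * S_D t - (ψ1 * I_F t / (1 + ρ1) + ψ2 * I_D t / (1 + ρ2) + ψ3 * (M t / (M t + C)) / (1 + ρ3)) * S_D t + γ3 * R_D t) (Set.Ici 0) t)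
    (hodeED : ∀ t ∈ Set.Ici (0:ℝ), HasDerivWithinAt E_D
        ((ψ1 * I_F t / (1 + ρ1) + ψ2 * I_D t / (1 + ρ2) + ψ3 * (M t / (M t + C)) / (1 + ρ3)) * S_D t - (μ3 + γ1 + γ2) * E_D t) (Set.Ici 0) t)
    (hodeID : ∀ t ∈ Set.Ici (0:ℝ), HasDerivWithinAt I_D
        (γ1 * E_D t - (μ3 + σ3) * I_D t) (Set.Ici 0) t)
    (hodeRD : ∀ t ∈ Set.Ici (0:ℝ), HasDerivWithinAt R_D
        (γ2 * E_D t - (μ3 + γ3) * R_D t) (Set.Ici 0) t)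
    (hodeM : ∀ t ∈ Set.Ici (0:ℝ), HasDerivWithinAt M
        (ν1 * I_H t + ν2 * I_F t + ν3 * I_D t - μ4 * M t) (Set.Ici 0) t)
    (hIHnn : ∀ t ≥ (0:ℝ), 0 ≤ I_H t) :
    (∀ t ≥ (0:ℝ), S_H t + E_H t + I_H t + R_H t ≤
      θ1 / μ1 + (S_H 0 + E_H 0 + I_H 0 + R_H 0 - θ1 / μ1) * Real.exp (-μ1 * t)) ∧
    (0 ≤ S_H 0 + E_H 0 + I_H 0 + R_H 0 →
      ∀ t ≥ (0:ℝ), S_H t + E_H t + I_H t + R_H t ≤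
        max (θ1 / μ1) (S_H 0 + E_H 0 + I_H 0 + R_H 0)) := by
  have hμ1' : (0:ℝ) < μ1 := hμ1
  set c : ℝ := θ1 / μ1 with hc
  set N : ℝ → ℝ := fun t => S_H t + E_H t + I_H t + R_H t with hN
  have hNderiv : ∀ t ∈ Set.Ici (0:ℝ),
      HasDerivWithinAt N (θ1 - μ1 * N t - σ1 * I_H t) (Set.Ici 0) t := by
    intro t ht
    have h := (((hodeSH t ht).add (hodeEH t ht)).add (hodeIH t ht)).add (hodeRH t ht)
    refine h.congr_deriv ?_
    simp only [hN]; ring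
  set f : ℝ → ℝ := fun t => (N t - c) * Real.exp (μ1 * t) with hf
  have hfderiv : ∀ t ∈ Set.Ici (0:ℝ),
      HasDerivWithinAt f (-(σ1 * I_H t) * Real.exp (μ1 * t)) (Set.Ici 0) t := by
    intro t ht
    have h1 : HasDerivWithinAt (fun s => N s - c) (θ1 - μ1 * N t - σ1 * I_H t) (Set.Ici 0) t :=
      (hNderiv t ht).sub_const c
    have h2 : HasDerivAt (fun s : ℝ => Real.exp (μ1 * s)) (Real.exp (μ1 * t) * (μ1 * 1)) t :=
      ((hasDerivAt_id t).const_mul μ1).exp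
    have h := h1.mul (h2.hasDerivWithinAt)
    refine h.congr_deriv ?_
    have hcμ : μ1 * c = θ1 := by
      rw [hc]; field_simp
    nlinarith [Real.exp_pos (μ1 * t)]
  have hanti : AntitoneOn f (Set.Ici (0:ℝ)) := by
    apply antitoneOn_of_deriv_nonpos (convex_Ici 0)
    · intro t ht
      exact (hfderiv t ht).continuousWithinAt
    · intro t ht
      rw [interior_Ici] at ht
      exact ((hfderiv t (Set.mem_Ici.mpr (le_of_lt ht))).hasDerivAt (Ici_mem_nhds ht)).differentiableAt.differentiableWithinAt
    · intro t ht
      rw [interior_Ici] at ht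
      rw [((hfderiv t (Set.mem_Ici.mpr (le_of_lt ht))).hasDerivAt (Ici_mem_nhds ht)).deriv]
      have h1 : 0 ≤ σ1 * I_H t * Real.exp (μ1 * t) :=
        mul_nonneg (mul_nonneg hσ1.le (hIHnn t ht.le)) (Real.exp_pos _).le
      nlinarith [h1]
  have key : ∀ t ≥ (0:ℝ), N t ≤ c + (N 0 - c) * Real.exp (-μ1 * t) := by
    intro t ht
    have h := hanti (Set.self_mem_Ici) ht ht
    simp only [hf] at h
    have he : Real.exp (μ1 * 0) = 1 := by norm_num
    rw [he, mul_one] at h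
    have hep : (0:ℝ) < Real.exp (μ1 * t) := Real.exp_pos _
    have hmul : Real.exp (μ1 * t) * Real.exp (-μ1 * t) = 1 := by
      rw [← Real.exp_add]; ring_nf; exact Real.exp_zero
    have h2 : N t - c ≤ (N 0 - c) * Real.exp (-μ1 * t) := by
      calc N t - c = (N t - c) * Real.exp (μ1 * t) * Real.exp (-μ1 * t) := by
            rw [mul_assoc, hmul, mul_one]
        _ ≤ (N 0 - c) * Real.exp (-μ1 * t) :=
            mul_le_mul_of_nonneg_right h (Real.exp_pos _).le
    linarith
  constructor
  · exact key
  · intro hN0 t ht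
    have h := key t ht
    have he1 : Real.exp (-μ1 * t) ≤ 1 := by
      rw [show (1:ℝ) = Real.exp 0 from (Real.exp_zero).symm]
      exact Real.exp_le_exp.mpr (mul_nonpos_iff.mpr (Or.inr ⟨neg_nonpos.mpr hμ1.le, ht⟩))
    have hep : (0:ℝ) < Real.exp (-μ1 * t) := Real.exp_pos _
    rcases le_total (N 0) c with hcase | hcase
    · have h0 : (N 0 - c) * Real.exp (-μ1 * t) ≤ 0 :=
        mul_nonpos_iff.mpr (Or.inr ⟨by linarith, hep.le⟩)
      calc N t ≤ c := by linarith
        _ ≤ max c (N 0) := le_max_left _ _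
    · have h0 : (N 0 - c) * Real.exp (-μ1 * t) ≤ N 0 - c :=
        mul_le_of_le_one_right (by linarith) he1
      calc N t ≤ N 0 := by linarith
        _ ≤ max c (N 0) := le_max_right _ _
end
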